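/- Let v be an irreducible Llull matrix and φ ∈ (0,∞)^S a solution of the Zermelo equations Σ_{y≠x} t_{xy} φ_x/(φ_x+φ_y) = Σ_{y≠x} v_{xy}. Then the Hessian quadratic form of log F at φ satisfies Σ_{x,y} (∂² log F/∂φ_x∂φ_y) ψ_x ψ_y = − Σ_{{x,y}} t_{xy}/((φ_x+φ_y)² φ_x φ_y) · (φ_y ψ_x − φ_x ψ_y)², and this is strictly negative for every ψ with Σ_x ψ_x = 0 and ψ ≠ 0. -/

import Mathlib

/-- The minimum score along a path `x, z₁, …, zₖ, y` (the list gives the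
intermediate points; the empty list is the direct link from `x` to `y`). -/
def chainMin {S : Type*} (v : S → S → ℝ) : S → List S → S → ℝ
  | x, [], y => v x y
  | x, z :: l, y => min (v x z) (chainMin v z l y)

/-- Indirect (max-min) score: supremum over all paths from `x` to `y`
of the minimum direct score along the path. -/
noncomputable def iScore {S : Type*} (v : S → S → ℝ) (x y : S) : ℝ :=
  sSup {r : ℝ | ∃ l : List S, r = chainMin v x l y}

/-- A Llull matrix: preference scores in `[0,1]` with `v x y + v y x ≤ 1`. -/
def IsLlull {S : Type*} (v : S → S → ℝ) : Prop :=
  ∀ x y : S, x ≠ y → 0 ≤ v x y ∧ v x y ≤ 1 ∧ v x y + v y x ≤ 1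


open Finset in
/-- Zermelo's likelihood function
`F(φ) = ∏_{{x,y}} φ_x^{v_{xy}} φ_y^{v_{yx}} / (φ_x+φ_y)^{t_{xy}}`,
written as a product over ordered pairs of distinct elements. -/
noncomputable def Zf {S : Type*} [Fintype S] [DecidableEq S]
    (v : S → S → ℝ) (φ : S → ℝ) : ℝ :=
  ∏ x, ∏ y ∈ Finset.univ.erase x, (φ x) ^ (v x y) / (φ x + φ y) ^ (v x y)

/-- The open simplex of normalized positive strength vectors. -/
def simplexPos (S : Type*) [Fintype S] : Set (S → ℝ) :=
  {φ | (∀ x, 0 < φ x) ∧ ∑ x, φ x = 1}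

/-- Zermelo's system of equations
`Σ_{y≠x} t_{xy} φ_x/(φ_x+φ_y) = Σ_{y≠x} v_{xy}` for all `x`. -/
def ZermeloEq {S : Type*} [Fintype S] [DecidableEq S]
    (v : S → S → ℝ) (φ : S → ℝ) : Prop :=
  ∀ x, ∑ y ∈ Finset.univ.erase x, (v x y + v y x) * (φ x / (φ x + φ y)) =
    ∑ y ∈ Finset.univ.erase x, v x y


open Finset in
private lemma sum_erase_swap' {S : Type*} [Fintype S] [DecidableEq S] (f : S → S → ℝ) :
    ∑ x, ∑ y ∈ Finset.univ.erase x, f x y = ∑ x, ∑ y ∈ Finset.univ.erase x, f y x := by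
  have key : ∀ g : S → S → ℝ,
      (∑ x, ∑ y ∈ Finset.univ.erase x, g x y) = ∑ x, ∑ y, if y ≠ x then g x y else 0 := by
    intro g
    refine Finset.sum_congr rfl fun x _ => ?_
    rw [← Finset.sum_filter, Finset.filter_ne']
  rw [key, key, Finset.sum_comm]
  refine Finset.sum_congr rfl fun x _ => Finset.sum_congr rfl fun y _ => ?_
  by_cases h : x = y <;> simp [h, eq_comm]

private lemma log_Zf_eq' {S : Type*} [Fintype S] [DecidableEq S]
    (v : S → S → ℝ) (θ : S → ℝ) (hθ : ∀ x, 0 < θ x) :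
    Real.log (Zf v θ) =
      ∑ x, ∑ y ∈ Finset.univ.erase x, v x y * (Real.log (θ x) - Real.log (θ x + θ y)) := by
  unfold Zf
  rw [Real.log_prod]
  · refine Finset.sum_congr rfl fun x _ => ?_
    rw [Real.log_prod]
    · refine Finset.sum_congr rfl fun y _ => ?_
      rw [Real.log_div (by have := hθ x; positivity) (by have := hθ x; have := hθ y; positivity),
        Real.log_rpow (hθ x), Real.log_rpow (by have := hθ x; have := hθ y; positivity), mul_sub]
    · intro y _
      have := hθ x; have := hθ y; positivity
  · intro x _
    refine Finset.prod_ne_zero_iff.mpr fun y _ => ?_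
    have := hθ x; have := hθ y; positivity

open Finset ContinuousLinearMap in
private lemma hessian_eval' {S : Type*} [Fintype S] [DecidableEq S]
    (v : S → S → ℝ) (φ : S → ℝ) (hφ : ∀ x, 0 < φ x) (ψ : S → ℝ) :
    (iteratedFDeriv ℝ 2 (fun θ : S → ℝ => Real.log (Zf v θ)) φ) ![ψ, ψ] =
      ∑ x, ∑ y ∈ Finset.univ.erase x,
        v x y * (-(ψ x)^2 / (φ x)^2 + (ψ x + ψ y)^2 / (φ x + φ y)^2) := by
  classical
  set U : Set (S → ℝ) := {θ | ∀ x, 0 < θ x} with hU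
  have hUopen : IsOpen U := by
    have : U = ⋂ x, (fun θ : S → ℝ => θ x) ⁻¹' Set.Ioi 0 := by
      ext θ; simp [hU, Set.mem_iInter]
    rw [this]
    exact isOpen_iInter_of_finite fun x => (continuous_apply x).isOpen_preimage _ isOpen_Ioi
  have hφU : φ ∈ U := hφ
  let P : S → (S → ℝ) →L[ℝ] ℝ := fun x => ContinuousLinearMap.proj x
  have hproj : ∀ (θ : S → ℝ) (x : S), HasFDerivAt (fun θ : S → ℝ => θ x) (P x) θ := by
    intro θ x
    exact hasFDerivAt_apply x θ
  let D1 : (S → ℝ) → (S → ℝ) →L[ℝ] ℝ := fun θ =>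
    ∑ x, ∑ y ∈ Finset.univ.erase x,
      v x y • ((θ x)⁻¹ • P x - (θ x + θ y)⁻¹ • (P x + P y))
  have hD1 : ∀ θ ∈ U, HasFDerivAt (fun θ : S → ℝ => Real.log (Zf v θ)) (D1 θ) θ := by
    intro θ hθ
    have hL : HasFDerivAt
        (fun θ : S → ℝ => ∑ x, ∑ y ∈ Finset.univ.erase x,
          v x y * (Real.log (θ x) - Real.log (θ x + θ y))) (D1 θ) θ := by
      refine HasFDerivAt.fun_sum fun x _ => HasFDerivAt.fun_sum fun y _ => ?_
      have h1 : HasFDerivAt (fun θ : S → ℝ => Real.log (θ x)) ((θ x)⁻¹ • P x) θ :=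
        (hproj θ x).log (ne_of_gt (hθ x))
      have h2 : HasFDerivAt (fun θ : S → ℝ => Real.log (θ x + θ y))
          ((θ x + θ y)⁻¹ • (P x + P y)) θ :=
        ((hproj θ x).add (hproj θ y)).log (by have := hθ x; have := hθ y; show θ x + θ y ≠ 0; positivity)
      exact (h1.sub h2).const_mul (v x y)
    refine hL.congr_of_eventuallyEq ?_
    filter_upwards [hUopen.mem_nhds hθ] with θ' hθ'
    exact log_Zf_eq' v θ' hθ'
  let D2 : (S → ℝ) →L[ℝ] (S → ℝ) →L[ℝ] ℝ :=
    ∑ x, ∑ y ∈ Finset.univ.erase x,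
      v x y • (((-(φ x ^ 2)⁻¹) • P x).smulRight (P x)
        - ((-((φ x + φ y) ^ 2)⁻¹) • (P x + P y)).smulRight (P x + P y))
  have hD2 : HasFDerivAt D1 D2 φ := by
    refine HasFDerivAt.fun_sum fun x _ => HasFDerivAt.fun_sum fun y _ => ?_
    have hinv1 : HasFDerivAt (fun θ : S → ℝ => (θ x)⁻¹) ((-(φ x ^ 2)⁻¹) • P x) φ :=
      (hasDerivAt_inv (ne_of_gt (hφ x))).comp_hasFDerivAt φ (hproj φ x)
    have hinv2 : HasFDerivAt (fun θ : S → ℝ => (θ x + θ y)⁻¹)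
        ((-((φ x + φ y) ^ 2)⁻¹) • (P x + P y)) φ :=
      (hasDerivAt_inv (by have := hφ x; have := hφ y; positivity)).comp_hasFDerivAt φ
        ((hproj φ x).add (hproj φ y))
    exact ((hinv1.smul_const (P x)).sub (hinv2.smul_const (P x + P y))).fun_const_smul (v x y)
  have hev : fderiv ℝ (fun θ : S → ℝ => Real.log (Zf v θ)) =ᶠ[nhds φ] D1 := by
    filter_upwards [hUopen.mem_nhds hφU] with θ hθ using (hD1 θ hθ).fderiv
  have h2 : fderiv ℝ (fderiv ℝ (fun θ : S → ℝ => Real.log (Zf v θ))) φ = D2 := by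
    rw [hev.fderiv_eq, hD2.fderiv]
  rw [iteratedFDeriv_two_apply, h2]
  simp only [D2, P, ContinuousLinearMap.sum_apply, ContinuousLinearMap.smul_apply,
    ContinuousLinearMap.sub_apply, ContinuousLinearMap.smulRight_apply,
    ContinuousLinearMap.add_apply, ContinuousLinearMap.proj_apply,
    smul_eq_mul, Matrix.cons_val_zero, Matrix.cons_val_one, Matrix.head_cons]
  refine Finset.sum_congr rfl fun x _ => Finset.sum_congr rfl fun y _ => ?_
  have hx := hφ x; have hy' := hφ y
  field_simp
  ring

/-- At a critical point of `log F`, the Hessian quadratic form equals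
`− Σ_{{x,y}} t_{xy}/((φ_x+φ_y)² φ_x φ_y) (φ_y ψ_x − φ_x ψ_y)²`
(the unordered-pair sum written as half the ordered sum), and it is strictly
negative on nonzero directions `ψ` with `Σ ψ_x = 0`. -/
theorem stmt8 {S : Type*} [Fintype S] [DecidableEq S] (hS : 2 ≤ Fintype.card S)
    (v : S → S → ℝ) (hv : IsLlull v)
    (hirr : ∀ x y : S, x ≠ y → 0 < iScore v x y)
    (φ : S → ℝ) (hφ : ∀ x, 0 < φ x) (heq : ZermeloEq v φ) (ψ : S → ℝ) :
    (iteratedFDeriv ℝ 2 (fun θ : S → ℝ => Real.log (Zf v θ)) φ) ![ψ, ψ] =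
      - (1/2) * ∑ x, ∑ y ∈ Finset.univ.erase x,
        (v x y + v y x) / ((φ x + φ y)^2 * φ x * φ y) * (φ y * ψ x - φ x * ψ y)^2 ∧
    (∑ x, ψ x = 0 → ψ ≠ 0 →
      (iteratedFDeriv ℝ 2 (fun θ : S → ℝ => Real.log (Zf v θ)) φ) ![ψ, ψ] < 0) := by
  classical
  have key := hessian_eval' v φ hφ ψ
  -- the algebraic identity
  have main : ∑ x, ∑ y ∈ Finset.univ.erase x,
      v x y * (-(ψ x)^2 / (φ x)^2 + (ψ x + ψ y)^2 / (φ x + φ y)^2) =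
      - (1/2) * ∑ x, ∑ y ∈ Finset.univ.erase x,
        (v x y + v y x) / ((φ x + φ y)^2 * φ x * φ y) * (φ y * ψ x - φ x * ψ y)^2 := by
    have step1 : ∑ x, ∑ y ∈ Finset.univ.erase x,
        v x y * (-(ψ x)^2 / (φ x)^2 + (ψ x + ψ y)^2 / (φ x + φ y)^2) =
        ∑ x, ∑ y ∈ Finset.univ.erase x,
          (v x y * (ψ x + ψ y)^2 / (φ x + φ y)^2
            - (v x y + v y x) * (φ x / (φ x + φ y)) * ((ψ x)^2 / (φ x)^2)) := by
      refine Finset.sum_congr rfl fun x _ => ?_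
      have h1 : ∑ y ∈ Finset.univ.erase x,
          v x y * (-(ψ x)^2 / (φ x)^2 + (ψ x + ψ y)^2 / (φ x + φ y)^2) =
          (∑ y ∈ Finset.univ.erase x, v x y * (ψ x + ψ y)^2 / (φ x + φ y)^2)
            - (∑ y ∈ Finset.univ.erase x, v x y) * ((ψ x)^2 / (φ x)^2) := by
        rw [Finset.sum_mul, ← Finset.sum_sub_distrib]
        exact Finset.sum_congr rfl fun y _ => by ring
      rw [h1, ← heq x, Finset.sum_mul, ← Finset.sum_sub_distrib]
    rw [step1]
    set G : S → S → ℝ := fun x y =>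
      v x y * (ψ x + ψ y)^2 / (φ x + φ y)^2
        - (v x y + v y x) * (φ x / (φ x + φ y)) * ((ψ x)^2 / (φ x)^2) with hG
    set T : S → S → ℝ := fun x y =>
      (v x y + v y x) / ((φ x + φ y)^2 * φ x * φ y) * (φ y * ψ x - φ x * ψ y)^2 with hT
    have hswap := sum_erase_swap' G
    have hcomb : (∑ x, ∑ y ∈ Finset.univ.erase x, G x y)
        + (∑ x, ∑ y ∈ Finset.univ.erase x, G y x)
        = ∑ x, ∑ y ∈ Finset.univ.erase x, (G x y + G y x) := by
      rw [← Finset.sum_add_distrib]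
      exact Finset.sum_congr rfl fun x _ => by rw [← Finset.sum_add_distrib]
    have hterm : ∀ x, ∀ y ∈ Finset.univ.erase x, G x y + G y x = - T x y := by
      intro x y hy
      have hx := hφ x
      have hy' := hφ y
      simp only [hG, hT]
      field_simp
      ring
    have hsum2 : ∑ x, ∑ y ∈ Finset.univ.erase x, (G x y + G y x)
        = - ∑ x, ∑ y ∈ Finset.univ.erase x, T x y := by
      rw [← Finset.sum_neg_distrib]
      exact Finset.sum_congr rfl fun x _ => by
        rw [← Finset.sum_neg_distrib]
        exact Finset.sum_congr rfl fun y hy => hterm x y hy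
    have : (∑ x, ∑ y ∈ Finset.univ.erase x, G x y)
        + (∑ x, ∑ y ∈ Finset.univ.erase x, G x y)
        = - ∑ x, ∑ y ∈ Finset.univ.erase x, T x y := by
      nth_rewrite 2 [hswap]
      rw [hcomb, hsum2]
    linarith [this]
  refine ⟨key.trans main, fun hsum hne => ?_⟩
  rw [key, main]
  -- nonnegativity of each term
  have hnn : ∀ x, ∀ y ∈ Finset.univ.erase x,
      0 ≤ (v x y + v y x) / ((φ x + φ y)^2 * φ x * φ y) * (φ y * ψ x - φ x * ψ y)^2 := by
    intro x y hy
    have hyx : y ≠ x := Finset.ne_of_mem_erase hy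
    have h0 : 0 ≤ v x y + v y x :=
      add_nonneg (hv x y hyx.symm).1 (hv y x hyx).1
    have hden : 0 < (φ x + φ y)^2 * φ x * φ y := by
      have := hφ x; have := hφ y; positivity
    exact mul_nonneg (div_nonneg h0 hden.le) (sq_nonneg _)
  have hC0 : 0 ≤ ∑ x, ∑ y ∈ Finset.univ.erase x,
      (v x y + v y x) / ((φ x + φ y)^2 * φ x * φ y) * (φ y * ψ x - φ x * ψ y)^2 :=
    Finset.sum_nonneg fun x _ => Finset.sum_nonneg (hnn x)
  rcases hC0.lt_or_eq with hpos | hzero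
  · linarith
  · exfalso
    -- all terms vanish
    have hz : ∀ x, ∀ y ∈ Finset.univ.erase x,
        (v x y + v y x) / ((φ x + φ y)^2 * φ x * φ y) * (φ y * ψ x - φ x * ψ y)^2 = 0 := by
      have houter := (Finset.sum_eq_zero_iff_of_nonneg
        (fun x _ => Finset.sum_nonneg (hnn x))).mp hzero.symm
      intro x y hy
      exact (Finset.sum_eq_zero_iff_of_nonneg (hnn x)).mp
        (houter x (Finset.mem_univ x)) y hy
    have edge : ∀ x y : S, 0 < v x y → ψ x * φ y = ψ y * φ x := by
      intro x y hvxy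
      by_cases hxy : x = y
      · subst hxy; ring
      · have ht : 0 < v x y + v y x := by
          have := (hv y x (Ne.symm hxy)).1; linarith
        have hy : y ∈ Finset.univ.erase x :=
          Finset.mem_erase.mpr ⟨Ne.symm hxy, Finset.mem_univ y⟩
        have h0 := hz x y hy
        have hden : 0 < (φ x + φ y)^2 * φ x * φ y := by
          have := hφ x; have := hφ y; positivity
        have hsq : (φ y * ψ x - φ x * ψ y)^2 = 0 := by
          by_contra hcon
          have h1 : 0 < (φ y * ψ x - φ x * ψ y)^2 :=
            lt_of_le_of_ne (sq_nonneg _) (Ne.symm hcon)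
          have h2 : 0 < (v x y + v y x) / ((φ x + φ y)^2 * φ x * φ y)
              * (φ y * ψ x - φ x * ψ y)^2 := mul_pos (div_pos ht hden) h1
          linarith
        have h3 : φ y * ψ x - φ x * ψ y = 0 := sq_eq_zero_iff.mp hsq
        linear_combination h3
    -- connectivity along chains
    have chain : ∀ (l : List S) (x y : S), 0 < chainMin v x l y → ψ x * φ y = ψ y * φ x := by
      intro l
      induction l with
      | nil => intro x y h; exact edge x y h
      | cons z l ih =>
        intro x y h
        rw [chainMin] at h
        have h1 := edge x z (lt_of_lt_of_le h (min_le_left _ _))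
        have h2 := ih z y (lt_of_lt_of_le h (min_le_right _ _))
        have hz0 : φ z ≠ 0 := (hφ z).ne'
        have hc : (ψ x * φ y) * φ z = (ψ y * φ x) * φ z := by
          calc (ψ x * φ y) * φ z = (ψ x * φ z) * φ y := by ring
          _ = (ψ z * φ x) * φ y := by rw [h1]
          _ = (ψ z * φ y) * φ x := by ring
          _ = (ψ y * φ z) * φ x := by rw [h2]
          _ = (ψ y * φ x) * φ z := by ring
        exact mul_right_cancel₀ hz0 hc
    have hrel : ∀ x y : S, ψ x * φ y = ψ y * φ x := by
      intro x y
      by_cases hxy : x = y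
      · subst hxy; rfl
      · have hI := hirr x y hxy
        unfold iScore at hI
        obtain ⟨r, hrmem, hr⟩ := exists_lt_of_lt_csSup
          (s := {r : ℝ | ∃ l : List S, r = chainMin v x l y}) ⟨v x y, [], rfl⟩ hI
        obtain ⟨l, rfl⟩ := hrmem
        exact chain l x y hr
    have hne' : Nonempty S := Fintype.card_pos_iff.mp (lt_of_lt_of_le two_pos hS)
    have hφsum : 0 < ∑ x, φ x :=
      Finset.sum_pos (fun x _ => hφ x) Finset.univ_nonempty
    have hψ0 : ∀ y, ψ y = 0 := by
      intro y
      have hmul : ψ y * ∑ x, φ x = 0 := by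
        rw [Finset.mul_sum]
        calc ∑ x, ψ y * φ x = ∑ x, ψ x * φ y :=
              Finset.sum_congr rfl fun x _ => (hrel x y).symm
        _ = (∑ x, ψ x) * φ y := by rw [← Finset.sum_mul]
        _ = 0 := by rw [hsum, zero_mul]
      exact (mul_eq_zero.mp hmul).resolve_right hφsum.ne'
    exact hne (funext hψ0)
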